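/- For each of the types R_N ∈ {B_N, B_N^∨}, for all j, k ∈ {1,…,N}, ∫₀^L ∫₀^W exp(−2π𝒩 y²/(LW)) · conj(M_j(x+iy)) M_k(x+iy) dy dx = δ_{jk} h_j, where h₁ = 4 (LW/√(2𝒩W/L)) and h_j = 2 (LW/√(2𝒩W/L)) e^{2πW J(j)²/(𝒩L)} for j ∈ {2,…,N}. -/

import Mathlib

open Complex MeasureTheory
open scoped Real ComplexConjugate

noncomputable section

/-- The Jacobi theta function θ₀. -/
def jtheta0 (v τ : ℂ) : ℂ :=
  ∑' n : ℤ, (-1 : ℂ) ^ n * Complex.exp (π * I * τ * (n : ℂ) ^ 2) *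
    Complex.exp (2 * π * I * (n : ℂ) * v)

/-- The Jacobi theta function θ₁. -/
def jtheta1 (v τ : ℂ) : ℂ :=
  I * ∑' n : ℤ, (-1 : ℂ) ^ n * Complex.exp (π * I * τ * ((n : ℂ) - 1 / 2) ^ 2) *
    Complex.exp ((2 * (n : ℂ) - 1) * π * I * v)

/-- The Jacobi theta function θ₂. -/
def jtheta2 (v τ : ℂ) : ℂ :=
  ∑' n : ℤ, Complex.exp (π * I * τ * ((n : ℂ) - 1 / 2) ^ 2) *
    Complex.exp ((2 * (n : ℂ) - 1) * π * I * v)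

/-- The Jacobi theta function θ₃. -/
def jtheta3 (v τ : ℂ) : ℂ :=
  ∑' n : ℤ, Complex.exp (π * I * τ * (n : ℂ) ^ 2) * Complex.exp (2 * π * I * (n : ℂ) * v)

/-- Dedekind's eta function. -/
def dedekindEta (τ : ℂ) : ℂ :=
  Complex.exp (π * I * τ / 12) * ∏' n : ℕ, (1 - Complex.exp (2 * π * I * ((n : ℂ) + 1) * τ))

/-- For types B_N, B_N^∨:
M_j(z) = e^{2πiJz/L} θ₁(Jτ + 𝒩z/L; 𝒩τ) − e^{−2πiJz/L} θ₁(Jτ − 𝒩z/L; 𝒩τ), τ = iW/L. -/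
def MB (nn : ℕ) (L W : ℝ) (Jj : ℝ) (z : ℂ) : ℂ :=
  Complex.exp (2 * π * I * Jj * z / L) *
      jtheta1 ((Jj : ℂ) * (I * W / L) + nn * z / L) (nn * (I * W / L)) -
    Complex.exp (-(2 * π * I * Jj * z / L)) *
      jtheta1 ((Jj : ℂ) * (I * W / L) - nn * z / L) (nn * (I * W / L))

/-- The double integral of the statement for a given 𝒩 (J(j) = j − 1, 0-based: J = j). -/
def lhsInt (N nn : ℕ) (L W : ℝ) (j k : Fin N) : ℂ :=
  ∫ x in (0:ℝ)..L, ∫ y in (0:ℝ)..W,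
    (Real.exp (-(2 * π * nn * y ^ 2 / (L * W))) : ℂ) *
      (conj (MB nn L W ((j : ℕ) : ℝ) (x + I * y)) * MB nn L W ((k : ℕ) : ℝ) (x + I * y))

/-- h₁ = 4 (LW/√(2𝒩W/L)) and h_j = 2 (LW/√(2𝒩W/L)) e^{2πW J(j)²/(𝒩L)} for j ≥ 2. -/
def hB (N nn : ℕ) (L W : ℝ) (j : Fin N) : ℝ :=
  if (j : ℕ) = 0 then 4 * (L * W / Real.sqrt (2 * nn * W / L))
  else 2 * (L * W / Real.sqrt (2 * nn * W / L)) *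
    Real.exp (2 * π * W * ((j : ℕ) : ℝ) ^ 2 / (nn * L))

namespace St7

/-- elementary unimodular exponential -/
def eI (t : ℝ) : ℂ := Complex.exp ((t : ℂ) * I)

/-- real exponential as a complex number -/
def eR (t : ℝ) : ℂ := ((Real.exp t : ℝ) : ℂ)

lemma eI_add (s t : ℝ) : eI (s + t) = eI s * eI t := by
  simp [eI, ← Complex.exp_add, add_mul]

lemma eR_add (s t : ℝ) : eR (s + t) = eR s * eR t := by
  simp [eR, Real.exp_add]

lemma conj_eI (t : ℝ) : conj (eI t) = eI (-t) := by
  simp [eI, ← Complex.exp_conj]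

lemma conj_eR (t : ℝ) : conj (eR t) = eR t := Complex.conj_ofReal _

lemma norm_eI (t : ℝ) : ‖eI t‖ = 1 := by
  simp [eI, Complex.norm_exp]

lemma norm_eR (t : ℝ) : ‖eR t‖ = Real.exp t := by
  rw [eR, Complex.norm_real]; exact Real.norm_of_nonneg (Real.exp_pos t).le

/-- Master summability lemma: Gaussian with linear drift, over `ℤ`. -/
lemma summable_master {r : ℝ} (hr : 0 < r) (b : ℝ) :
    Summable fun n : ℤ => Real.exp (-r * (n : ℝ) ^ 2 + b * |(n : ℝ)|) := by
  have H := summable_pow_mul_jacobiTheta₂_term_bound (b / (2 * π)) (T := r / π)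
    (by positivity) 0
  refine H.congr fun n => ?_
  rw [pow_zero, one_mul]
  congr 1
  have hπ := Real.pi_ne_zero
  field_simp
  rw [Int.cast_abs]
  ring

/-- Summability with affine argument. -/
lemma summable_affine {s : ℝ} (hs : 0 < s) {a : ℝ} (ha : 0 < a) (δ : ℝ) {B : ℝ}
    (hB : 0 ≤ B) :
    Summable fun n : ℤ => Real.exp (-s * (a * n + δ) ^ 2 + B * |a * n + δ|) := by
  have hsum := (summable_master (r := s * a ^ 2) (by positivity)
      (2 * s * a * |δ| + B * a)).mul_left (Real.exp (B * |δ|))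
  refine hsum.of_nonneg_of_le (fun n => (Real.exp_pos _).le) fun n => ?_
  rw [← Real.exp_add]
  apply Real.exp_le_exp.mpr
  have h1 : |a * (n : ℝ) + δ| ≤ a * |(n : ℝ)| + |δ| := by
    calc |a * (n : ℝ) + δ| ≤ |a * (n : ℝ)| + |δ| := abs_add_le _ _
    _ = a * |(n : ℝ)| + |δ| := by rw [abs_mul, abs_of_pos ha]
  have h2 : -(δ * (n : ℝ)) ≤ |δ| * |(n : ℝ)| := by
    calc -(δ * (n : ℝ)) ≤ |δ * (n : ℝ)| := neg_le_abs _
    _ = |δ| * |(n : ℝ)| := abs_mul _ _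
  nlinarith [abs_nonneg (n : ℝ), abs_nonneg δ, sq_nonneg δ,
    mul_le_mul_of_nonneg_left h1 hB, mul_le_mul_of_nonneg_left h2 (by positivity : (0:ℝ) ≤ 2*s*a)]



variable (nn : ℕ) (L W : ℝ)

/-- The frequency c_n = 𝒩 n − 𝒩/2 + j. -/
def cR (nn : ℕ) (j : ℕ) (n : ℤ) : ℝ := nn * n - nn / 2 + j

/-- Gaussian coefficient. -/
def ga (nn : ℕ) (L W : ℝ) (j : ℕ) (n : ℤ) : ℝ :=
  Real.exp (-(π * W / L) * (nn * ((n : ℝ) - 1 / 2) ^ 2 + (2 * (n : ℝ) - 1) * j))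

lemma ga_pos (j : ℕ) (n : ℤ) : 0 < ga nn L W j n := Real.exp_pos _

lemma ga_eq (hL : L ≠ 0) (hnn : (nn : ℝ) ≠ 0) (j : ℕ) (n : ℤ) :
    ga nn L W j n = Real.exp (π * W / (L * nn) * ((j : ℝ) ^ 2 - cR nn j n ^ 2)) := by
  have key : (j : ℝ) ^ 2 - cR nn j n ^ 2 =
      -((nn : ℝ) * ((nn : ℝ) * ((n : ℝ) - 1 / 2) ^ 2 + (2 * (n : ℝ) - 1) * j)) := by
    unfold cR; ring
  rw [key, ga]
  congr 1
  field_simp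

/-- The basic summand. -/
def term (nn : ℕ) (L W : ℝ) (j : ℕ) (n : ℤ) (z : ℂ) : ℂ :=
  (-1) ^ n * (ga nn L W j n : ℝ) *
    (Complex.exp (2 * π * I * (cR nn j n : ℝ) * z / L) -
     Complex.exp (-(2 * π * I * (cR nn j n : ℝ) * z / L)))

def termP (nn : ℕ) (L W : ℝ) (j : ℕ) (n : ℤ) (z : ℂ) : ℂ :=
  (-1) ^ n * (ga nn L W j n : ℝ) * Complex.exp (2 * π * I * (cR nn j n : ℝ) * z / L)

def termM (nn : ℕ) (L W : ℝ) (j : ℕ) (n : ℤ) (z : ℂ) : ℂ :=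
  (-1) ^ n * (ga nn L W j n : ℝ) * Complex.exp (-(2 * π * I * (cR nn j n : ℝ) * z / L))

lemma term_eq_sub (j : ℕ) (n : ℤ) (z : ℂ) :
    term nn L W j n z = termP nn L W j n z - termM nn L W j n z := by
  unfold term termP termM; ring

/-- splitting of the exponential into modulus and phase -/
lemma cexp_split (c x y : ℝ) :
    Complex.exp (2 * π * I * (c : ℂ) * ((x : ℂ) + I * y) / L) =
      eI (2 * π * c * x / L) * eR (-(2 * π * c * y / L)) := by
  rw [eI, eR, Complex.ofReal_exp, ← Complex.exp_add]
  congr 1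
  push_cast
  linear_combination (2 * (π : ℂ) * c * y / L) * Complex.I_sq

lemma cexp_split_neg (c x y : ℝ) :
    Complex.exp (-(2 * π * I * (c : ℂ) * ((x : ℂ) + I * y) / L)) =
      eI (-(2 * π * c * x / L)) * eR (2 * π * c * y / L) := by
  rw [eI, eR, Complex.ofReal_exp, ← Complex.exp_add]
  congr 1
  push_cast
  linear_combination (-(2 * (π : ℂ) * c * y / L)) * Complex.I_sq

lemma termP_split (j : ℕ) (n : ℤ) (x y : ℝ) :
    termP nn L W j n (x + I * y) =
      (-1) ^ n * (ga nn L W j n : ℝ) *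
        (eI (2 * π * cR nn j n * x / L) * eR (-(2 * π * cR nn j n * y / L))) := by
  rw [termP, cexp_split]

lemma termM_split (j : ℕ) (n : ℤ) (x y : ℝ) :
    termM nn L W j n (x + I * y) =
      (-1) ^ n * (ga nn L W j n : ℝ) *
        (eI (-(2 * π * cR nn j n * x / L)) * eR (2 * π * cR nn j n * y / L)) := by
  rw [termM, cexp_split_neg]

/-- combined norm-bounding quantity -/
def u (nn : ℕ) (L W : ℝ) (j : ℕ) (n : ℤ) : ℝ :=
  ga nn L W j n * Real.exp (2 * π * W / L * |cR nn j n|)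

lemma u_pos (j : ℕ) (n : ℤ) : 0 < u nn L W j n :=
  mul_pos (ga_pos nn L W j n) (Real.exp_pos _)

lemma summable_u (hL : 0 < L) (hW : 0 < W) (hnn : 0 < nn) (j : ℕ) :
    Summable (u nn L W j) := by
  have hnn' : (0:ℝ) < (nn:ℝ) := by exact_mod_cast hnn
  have hs : (0:ℝ) < π * W / (L * nn) := by positivity
  have hB : (0:ℝ) ≤ 2 * π * W / L := by positivity
  have H := ((summable_affine hs hnn' ((j : ℝ) - nn / 2) hB).mul_left
      (Real.exp (π * W / (L * nn) * (j : ℝ) ^ 2)))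
  refine H.congr fun n => ?_
  have hc : (nn : ℝ) * (n : ℝ) + ((j : ℝ) - nn / 2) = cR nn j n := by unfold cR; ring
  rw [hc, u, ga_eq nn L W hL.ne' hnn'.ne' j n, ← Real.exp_add, ← Real.exp_add]
  congr 1
  ring

lemma norm_termP_le (j : ℕ) (n : ℤ) (x y : ℝ) (hy0 : 0 ≤ y) (hyW : y ≤ W)
    (hL : 0 < L) :
    ‖termP nn L W j n (x + I * y)‖ ≤ u nn L W j n := by
  rw [termP_split]
  simp only [norm_mul, norm_eI, norm_eR, norm_zpow, norm_neg, norm_one, one_zpow, one_mul,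
    Complex.norm_real, Real.norm_of_nonneg (ga_pos nn L W j n).le]
  unfold u
  refine mul_le_mul_of_nonneg_left ?_ (ga_pos nn L W j n).le
  apply Real.exp_le_exp.mpr
  set c := cR nn j n with hc
  have h0 : 0 ≤ |c| * W + c * y := by
    nlinarith [mul_nonneg (abs_nonneg c) (sub_nonneg.mpr hyW),
      mul_nonneg (by linarith [neg_abs_le c] : (0:ℝ) ≤ |c| + c) hy0]
  have h1 := mul_le_mul_of_nonneg_left h0 (by positivity : (0:ℝ) ≤ 2*π)
  have h : -(2*π*c*y) ≤ 2*π*W*|c| := by nlinarith [h1]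
  calc -(2*π*c*y/L) = (-(2*π*c*y))/L := by ring
    _ ≤ (2*π*W*|c|)/L := by gcongr
    _ = 2*π*W/L*|c| := by ring

lemma norm_termM_le (j : ℕ) (n : ℤ) (x y : ℝ) (hy0 : 0 ≤ y) (hyW : y ≤ W)
    (hL : 0 < L) :
    ‖termM nn L W j n (x + I * y)‖ ≤ u nn L W j n := by
  rw [termM_split]
  simp only [norm_mul, norm_eI, norm_eR, norm_zpow, norm_neg, norm_one, one_zpow, one_mul,
    Complex.norm_real, Real.norm_of_nonneg (ga_pos nn L W j n).le]
  unfold u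
  refine mul_le_mul_of_nonneg_left ?_ (ga_pos nn L W j n).le
  apply Real.exp_le_exp.mpr
  set c := cR nn j n with hc
  have h0 : 0 ≤ |c| * W - c * y := by
    nlinarith [mul_nonneg (abs_nonneg c) (sub_nonneg.mpr hyW),
      mul_nonneg (by linarith [le_abs_self c] : (0:ℝ) ≤ |c| - c) hy0]
  have h1 := mul_le_mul_of_nonneg_left h0 (by positivity : (0:ℝ) ≤ 2*π)
  have h : 2*π*c*y ≤ 2*π*W*|c| := by nlinarith [h1]
  calc 2*π*c*y/L = (2*π*c*y)/L := by ring
    _ ≤ (2*π*W*|c|)/L := by gcongr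
    _ = 2*π*W/L*|c| := by ring

lemma norm_term_le (j : ℕ) (n : ℤ) (x y : ℝ) (hy0 : 0 ≤ y) (hyW : y ≤ W)
    (hL : 0 < L) :
    ‖term nn L W j n (x + I * y)‖ ≤ 2 * u nn L W j n := by
  rw [term_eq_sub]
  calc ‖termP nn L W j n (x + I * y) - termM nn L W j n (x + I * y)‖
      ≤ ‖termP nn L W j n (x + I * y)‖ + ‖termM nn L W j n (x + I * y)‖ := norm_sub_le _ _
    _ ≤ u nn L W j n + u nn L W j n := add_le_add
        (norm_termP_le nn L W j n x y hy0 hyW hL) (norm_termM_le nn L W j n x y hy0 hyW hL)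
    _ = 2 * u nn L W j n := by ring

lemma summable_termP (hL : 0 < L) (hW : 0 < W) (hnn : 0 < nn) (j : ℕ) (x y : ℝ)
    (hy0 : 0 ≤ y) (hyW : y ≤ W) :
    Summable fun n : ℤ => termP nn L W j n (x + I * y) :=
  (summable_u nn L W hL hW hnn j).of_norm_bounded
    (fun n => norm_termP_le nn L W j n x y hy0 hyW hL)

lemma summable_termM (hL : 0 < L) (hW : 0 < W) (hnn : 0 < nn) (j : ℕ) (x y : ℝ)
    (hy0 : 0 ≤ y) (hyW : y ≤ W) :
    Summable fun n : ℤ => termM nn L W j n (x + I * y) :=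
  (summable_u nn L W hL hW hnn j).of_norm_bounded
    (fun n => norm_termM_le nn L W j n x y hy0 hyW hL)

lemma summable_norm_term (hL : 0 < L) (hW : 0 < W) (hnn : 0 < nn) (j : ℕ) (x y : ℝ)
    (hy0 : 0 ≤ y) (hyW : y ≤ W) :
    Summable fun n : ℤ => ‖term nn L W j n (x + I * y)‖ :=
  ((summable_u nn L W hL hW hnn j).mul_left 2).of_nonneg_of_le
    (fun n => norm_nonneg _) (fun n => norm_term_le nn L W j n x y hy0 hyW hL)



/-- combine three exponentials against a constant -/
lemma key_exp (K : ℂ) {e₁ e₂ e₃ f : ℂ} (h : e₁ + e₂ + e₃ = f) :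
    Complex.exp e₁ * (K * Complex.exp e₂ * Complex.exp e₃) = K * Complex.exp f := by
  rw [← h, Complex.exp_add, Complex.exp_add]; ring

lemma expA (j : ℕ) (n : ℤ) (z : ℂ) :
    2 * π * I * ((j : ℝ) : ℂ) * z / L + π * I * ((nn : ℂ) * (I * W / L)) * ((n : ℂ) - 1 / 2) ^ 2 +
      (2 * (n : ℂ) - 1) * π * I * (((j : ℝ) : ℂ) * (I * W / L) + nn * z / L) =
    ((-(π * W / L) * (nn * ((n : ℝ) - 1 / 2) ^ 2 + (2 * (n : ℝ) - 1) * j) : ℝ) : ℂ) +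
      2 * π * I * ((cR nn j n : ℝ) : ℂ) * z / L := by
  unfold cR
  push_cast
  linear_combination (π * (nn : ℂ) * (W : ℂ) / (L : ℂ) * ((n : ℂ) - 1 / 2) ^ 2 +
    (2 * (n : ℂ) - 1) * π * (j : ℂ) * (W : ℂ) / (L : ℂ)) * Complex.I_sq

lemma expB (j : ℕ) (n : ℤ) (z : ℂ) :
    -(2 * π * I * ((j : ℝ) : ℂ) * z / L) + π * I * ((nn : ℂ) * (I * W / L)) * ((n : ℂ) - 1 / 2) ^ 2 +
      (2 * (n : ℂ) - 1) * π * I * (((j : ℝ) : ℂ) * (I * W / L) - nn * z / L) =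
    ((-(π * W / L) * (nn * ((n : ℝ) - 1 / 2) ^ 2 + (2 * (n : ℝ) - 1) * j) : ℝ) : ℂ) +
      -(2 * π * I * ((cR nn j n : ℝ) : ℂ) * z / L) := by
  unfold cR
  push_cast
  linear_combination (π * (nn : ℂ) * (W : ℂ) / (L : ℂ) * ((n : ℂ) - 1 / 2) ^ 2 +
    (2 * (n : ℂ) - 1) * π * (j : ℂ) * (W : ℂ) / (L : ℂ)) * Complex.I_sq

lemma termA (j : ℕ) (n : ℤ) (z : ℂ) :
    Complex.exp (2 * π * I * ((j : ℝ) : ℂ) * z / L) *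
      ((-1 : ℂ) ^ n * Complex.exp (π * I * ((nn : ℂ) * (I * W / L)) * ((n : ℂ) - 1 / 2) ^ 2) *
        Complex.exp ((2 * (n : ℂ) - 1) * π * I * (((j : ℝ) : ℂ) * (I * W / L) + nn * z / L))) =
    termP nn L W j n z := by
  rw [key_exp _ (expA nn L W j n z), termP, ga, Complex.ofReal_exp, Complex.exp_add]
  ring

lemma termB (j : ℕ) (n : ℤ) (z : ℂ) :
    Complex.exp (-(2 * π * I * ((j : ℝ) : ℂ) * z / L)) *
      ((-1 : ℂ) ^ n * Complex.exp (π * I * ((nn : ℂ) * (I * W / L)) * ((n : ℂ) - 1 / 2) ^ 2) *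
        Complex.exp ((2 * (n : ℂ) - 1) * π * I * (((j : ℝ) : ℂ) * (I * W / L) - nn * z / L))) =
    termM nn L W j n z := by
  rw [key_exp _ (expB nn L W j n z), termM, ga, Complex.ofReal_exp, Complex.exp_add]
  ring

/-- Expansion of `MB` as a sum over `ℤ`. -/
lemma MB_eq (hL : 0 < L) (hW : 0 < W) (hnn : 0 < nn) (j : ℕ) (x y : ℝ)
    (hy0 : 0 ≤ y) (hyW : y ≤ W) :
    MB nn L W (j : ℝ) (x + I * y) = I * ∑' n : ℤ, term nn L W j n (x + I * y) := by
  set z := (x : ℂ) + I * y with hz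
  rw [MB, jtheta1, jtheta1]
  rw [show ∀ a b c d : ℂ, a * (I * b) - c * (I * d) = I * (a * b - c * d) from
    fun a b c d => by ring]
  rw [← tsum_mul_left (a := Complex.exp (2 * π * I * ((j : ℝ) : ℂ) * z / L)),
    ← tsum_mul_left (a := Complex.exp (-(2 * π * I * ((j : ℝ) : ℂ) * z / L)))]
  congr 1
  have hA : ∀ n : ℤ, Complex.exp (2 * π * I * ((j : ℝ) : ℂ) * z / L) *
      ((-1 : ℂ) ^ n * Complex.exp (π * I * ((nn : ℂ) * (I * W / L)) * ((n : ℂ) - 1 / 2) ^ 2) *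
        Complex.exp ((2 * (n : ℂ) - 1) * π * I * (((j : ℝ) : ℂ) * (I * W / L) + nn * z / L))) =
      termP nn L W j n z := fun n => termA nn L W j n z
  have hB : ∀ n : ℤ, Complex.exp (-(2 * π * I * ((j : ℝ) : ℂ) * z / L)) *
      ((-1 : ℂ) ^ n * Complex.exp (π * I * ((nn : ℂ) * (I * W / L)) * ((n : ℂ) - 1 / 2) ^ 2) *
        Complex.exp ((2 * (n : ℂ) - 1) * π * I * (((j : ℝ) : ℂ) * (I * W / L) - nn * z / L))) =
      termM nn L W j n z := fun n => termB nn L W j n z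
  simp only [hA, hB]
  rw [← Summable.tsum_sub (summable_termP nn L W hL hW hnn j x y hy0 hyW)
    (summable_termM nn L W hL hW hnn j x y hy0 hyW)]
  exact tsum_congr fun n => (term_eq_sub nn L W j n z).symm



/-- the weighted `y`-integral -/
def YI (nn : ℕ) (L W : ℝ) (e : ℝ) : ℝ :=
  ∫ y in (0:ℝ)..W, Real.exp (-(2 * π * nn * y ^ 2 / (L * W)) + e * y)

/-- shifted Gaussian integral over `[0, W]` -/
def P (nn : ℕ) (L W : ℝ) (c : ℝ) : ℝ :=
  ∫ y in (0:ℝ)..W, Real.exp (-(2 * π * nn / (L * W)) * (y + c) ^ 2)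

lemma gauss_complete (hL : 0 < L) (hW : 0 < W) (hnn : 0 < nn) (j : ℕ) (n : ℤ)
    (ε : ℝ) (hε : ε = 1 ∨ ε = -1) :
    ga nn L W j n ^ 2 * YI nn L W (ε * (-(4 * π * cR nn j n / L))) =
      Real.exp (2 * π * W * (j : ℝ) ^ 2 / (L * nn)) * P nn L W (ε * (W / nn * cR nn j n)) := by
  have hnn' : (0:ℝ) < (nn:ℝ) := by exact_mod_cast hnn
  unfold YI P
  rw [← intervalIntegral.integral_const_mul, ← intervalIntegral.integral_const_mul]
  apply intervalIntegral.integral_congr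
  intro y _
  simp only [ga_eq nn L W hL.ne' hnn'.ne', pow_two, ← Real.exp_add]
  rcases hε with h | h <;> subst h <;> (congr 1; field_simp; ring)

/-- orthogonality of the `x`-exponentials -/
lemma integral_eI (hL : 0 < L) (d : ℤ) :
    (∫ x in (0:ℝ)..L, eI (2 * π * (d : ℝ) * x / L)) = if d = 0 then (L : ℂ) else 0 := by
  by_cases hd : d = 0
  · subst hd
    simp only [Int.cast_zero, mul_zero, zero_mul, zero_div, eI, mul_comm]
    norm_num
  · rw [if_neg hd]
    have hL' : (L : ℂ) ≠ 0 := by exact_mod_cast hL.ne'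
    have hdC : ((d : ℝ) : ℂ) ≠ 0 := by
      simp only [ne_eq, Complex.ofReal_intCast, Int.cast_eq_zero]; exact hd
    have hc : 2 * π * I * ((d : ℝ) : ℂ) / (L : ℂ) ≠ 0 := by
      apply div_ne_zero _ hL'
      refine mul_ne_zero (mul_ne_zero (mul_ne_zero two_ne_zero ?_) I_ne_zero) hdC
      exact_mod_cast Real.pi_ne_zero
    have key : ∀ x : ℝ, eI (2 * π * (d : ℝ) * x / L) =
        Complex.exp ((2 * π * I * ((d : ℝ) : ℂ) / L) * (x : ℂ)) := by
      intro x
      rw [eI]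
      congr 1
      push_cast
      ring
    simp only [key]
    rw [integral_exp_mul_complex hc]
    rw [div_mul_cancel₀ _ hL']
    rw [show 2 * (π : ℂ) * I * ((d : ℝ) : ℂ) = ((d : ℤ) : ℂ) * (2 * π * I) by push_cast; ring]
    rw [Complex.exp_int_mul_two_pi_mul_I]
    simp

/-- tiling: sum of shifted Gaussian integrals equals the full Gaussian integral -/
lemma tiling (hL : 0 < L) (hW : 0 < W) (hnn : 0 < nn) (γ : ℝ) :
    HasSum (fun n : ℤ => P nn L W (W * (γ + n))) (Real.sqrt (L * W / (2 * nn))) := by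
  have hnn' : (0:ℝ) < (nn:ℝ) := by exact_mod_cast hnn
  have hβ : (0:ℝ) < 2 * π * nn / (L * W) := by positivity
  set β : ℝ := 2 * π * nn / (L * W) with hβdef
  have h1 : ∀ n : ℤ, P nn L W (W * (γ + n)) =
      W * ∫ t in (γ + (n:ℝ))..(γ + n + 1), Real.exp (-(β * W ^ 2) * t ^ 2) := by
    intro n
    have h2 := intervalIntegral.integral_comp_add_right (a := (0:ℝ)) (b := W)
      (fun u => Real.exp (-β * u ^ 2)) (W * (γ + n))
    rw [show (0:ℝ) + W * (γ + n) = W * (γ + n) by ring,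
      show W + W * (γ + n) = W * (γ + (n:ℝ) + 1) by ring] at h2
    have h3 := intervalIntegral.integral_comp_mul_left (a := γ + (n:ℝ)) (b := γ + n + 1)
      (fun u => Real.exp (-β * u ^ 2)) hW.ne'
    beta_reduce at h2 h3
    have h3' : (∫ t in (γ + (n:ℝ))..(γ + n + 1), Real.exp (-(β * W ^ 2) * t ^ 2)) =
        W⁻¹ • ∫ x in (W * (γ + (n:ℝ)))..(W * (γ + n + 1)), Real.exp (-β * x ^ 2) := by
      rw [← h3]
      exact intervalIntegral.integral_congr fun t _ => by congr 1; ring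
    have hP : P nn L W (W * (γ + (n:ℝ))) =
        ∫ y in (0:ℝ)..W, Real.exp (-β * (y + W * (γ + (n:ℝ))) ^ 2) := by
      unfold P
      rw [hβdef]
    rw [hP, h2, h3', smul_eq_mul, ← mul_assoc, mul_inv_cancel₀ hW.ne', one_mul]
  have hint : Integrable (fun t : ℝ => Real.exp (-(β * W ^ 2) * t ^ 2)) := by
    apply integrable_exp_neg_mul_sq
    positivity
  have h4 := hint.hasSum_intervalIntegral (μ := volume) γ
  rw [integral_gaussian] at h4
  have h5 := h4.mul_left W
  have hval : W * Real.sqrt (π / (β * W ^ 2)) = Real.sqrt (L * W / (2 * nn)) := by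
    rw [show π / (β * W ^ 2) = L / (2 * nn * W) by
      rw [hβdef]; field_simp]
    conv_lhs => rw [← Real.sqrt_sq hW.le]
    rw [← Real.sqrt_mul (sq_nonneg W)]
    congr 1
    field_simp
    ring
    exact (Real.sqrt_sq hW.le).symm
  rw [hval] at h5
  simp only [← h1] at h5
  exact h5



/-- single summand of the double series, including the Gaussian weight -/
def F (nn : ℕ) (L W : ℝ) (j k : ℕ) (p : ℤ × ℤ) (x y : ℝ) : ℂ :=
  (Real.exp (-(2 * π * nn * y ^ 2 / (L * W))) : ℝ) *
    (conj (term nn L W j p.1 ((x : ℂ) + I * y)) * term nn L W k p.2 ((x : ℂ) + I * y))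

lemma term_split (j : ℕ) (n : ℤ) (x y : ℝ) :
    term nn L W j n ((x : ℂ) + I * y) =
      (-1) ^ n * (ga nn L W j n : ℝ) *
        (eI (2 * π * cR nn j n * x / L) * eR (-(2 * π * cR nn j n * y / L)) -
         eI (-(2 * π * cR nn j n * x / L)) * eR (2 * π * cR nn j n * y / L)) := by
  rw [term_eq_sub, termP_split, termM_split]
  ring

lemma conj_term (j : ℕ) (n : ℤ) (x y : ℝ) :
    conj (term nn L W j n ((x : ℂ) + I * y)) =
      (-1) ^ n * (ga nn L W j n : ℝ) *
        (eI (-(2 * π * cR nn j n * x / L)) * eR (-(2 * π * cR nn j n * y / L)) -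
         eI (2 * π * cR nn j n * x / L) * eR (2 * π * cR nn j n * y / L)) := by
  rw [term_split, map_mul, map_mul, map_sub, map_mul, map_mul, conj_eI, conj_eI,
    conj_eR, conj_eR, Complex.conj_ofReal, map_zpow₀, map_neg, map_one, neg_neg]

lemma wprod (s1 t1 s2 t2 e y : ℝ) (he : t1 + t2 = e * y) :
    (Real.exp (-(2 * π * nn * y ^ 2 / (L * W))) : ℝ) *
        (eI s1 * eR t1 * (eI s2 * eR t2)) =
      eI (s1 + s2) * (Real.exp (-(2 * π * nn * y ^ 2 / (L * W)) + e * y) : ℝ) := by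
  rw [eI_add, ← he, Real.exp_add, Real.exp_add, Complex.ofReal_mul, Complex.ofReal_mul]
  unfold eR
  ring

lemma expand4 (w g1 g2 A1 A2 B1 B2 s1 s2 : ℂ) :
    w * (s1 * g1 * (A1 - A2) * (s2 * g2 * (B1 - B2))) =
      s1 * s2 * (g1 * g2) *
        (w * (A1 * B1) - w * (A1 * B2) - w * (A2 * B1) + w * (A2 * B2)) := by ring

/-- pointwise expansion of `F` into four separable pieces -/
lemma F_expand (j k : ℕ) (n m : ℤ) (x y : ℝ) :
    F nn L W j k (n, m) x y =
      (-1) ^ (n + m) * ((ga nn L W j n : ℝ) * (ga nn L W k m : ℝ)) *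
        (eI (2 * π * (cR nn k m - cR nn j n) * x / L) *
            (Real.exp (-(2 * π * nn * y ^ 2 / (L * W)) +
              -(2 * π * (cR nn j n + cR nn k m) / L) * y) : ℝ)
         - eI (-(2 * π * (cR nn j n + cR nn k m) * x / L)) *
            (Real.exp (-(2 * π * nn * y ^ 2 / (L * W)) +
              2 * π * (cR nn k m - cR nn j n) / L * y) : ℝ)
         - eI (2 * π * (cR nn j n + cR nn k m) * x / L) *
            (Real.exp (-(2 * π * nn * y ^ 2 / (L * W)) +
              -(2 * π * (cR nn k m - cR nn j n) / L) * y) : ℝ)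
         + eI (2 * π * (cR nn j n - cR nn k m) * x / L) *
            (Real.exp (-(2 * π * nn * y ^ 2 / (L * W)) +
              2 * π * (cR nn j n + cR nn k m) / L * y) : ℝ)) := by
  rw [F, conj_term, term_split, expand4]
  rw [wprod nn L W _ _ _ _ (-(2 * π * (cR nn j n + cR nn k m) / L)) y (by ring),
    wprod nn L W _ _ _ _ (2 * π * (cR nn k m - cR nn j n) / L) y (by ring),
    wprod nn L W _ _ _ _ (-(2 * π * (cR nn k m - cR nn j n) / L)) y (by ring),
    wprod nn L W _ _ _ _ (2 * π * (cR nn j n + cR nn k m) / L) y (by ring)]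
  rw [← zpow_add₀ (by norm_num : (-1 : ℂ) ≠ 0)]
  have e1 : -(2 * π * cR nn j n * x / L) + 2 * π * cR nn k m * x / L =
      2 * π * (cR nn k m - cR nn j n) * x / L := by ring
  have e2 : -(2 * π * cR nn j n * x / L) + -(2 * π * cR nn k m * x / L) =
      -(2 * π * (cR nn j n + cR nn k m) * x / L) := by ring
  have e3 : 2 * π * cR nn j n * x / L + 2 * π * cR nn k m * x / L =
      2 * π * (cR nn j n + cR nn k m) * x / L := by ring
  have e4 : 2 * π * cR nn j n * x / L + -(2 * π * cR nn k m * x / L) =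
      2 * π * (cR nn j n - cR nn k m) * x / L := by ring
  rw [e1, e2, e3, e4]

lemma intervalIntegrable_exp_poly (a b c : ℝ) :
    IntervalIntegrable (fun y : ℝ => Real.exp (-(2 * π * nn * y ^ 2 / (L * W)) + c * y))
      volume a b := by
  apply Continuous.intervalIntegrable
  fun_prop

lemma intervalIntegrable_exp_polyC (a b c : ℝ) :
    IntervalIntegrable (fun y : ℝ =>
      ((Real.exp (-(2 * π * nn * y ^ 2 / (L * W)) + c * y) : ℝ) : ℂ)) volume a b := by
  apply Continuous.intervalIntegrable
  fun_prop

/-- the `y`-integral of a single pair -/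
lemma integral_y (j k : ℕ) (n m : ℤ) (x : ℝ) :
    (∫ y in (0:ℝ)..W, F nn L W j k (n, m) x y) =
      (-1) ^ (n + m) * ((ga nn L W j n : ℝ) * (ga nn L W k m : ℝ)) *
        (eI (2 * π * (cR nn k m - cR nn j n) * x / L) *
            (YI nn L W (-(2 * π * (cR nn j n + cR nn k m) / L)) : ℝ)
         - eI (-(2 * π * (cR nn j n + cR nn k m) * x / L)) *
            (YI nn L W (2 * π * (cR nn k m - cR nn j n) / L) : ℝ)
         - eI (2 * π * (cR nn j n + cR nn k m) * x / L) *
            (YI nn L W (-(2 * π * (cR nn k m - cR nn j n) / L)) : ℝ)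
         + eI (2 * π * (cR nn j n - cR nn k m) * x / L) *
            (YI nn L W (2 * π * (cR nn j n + cR nn k m) / L) : ℝ)) := by
  rw [intervalIntegral.integral_congr (g := fun y => _)
    (fun y _ => F_expand nn L W j k n m x y)]
  rw [intervalIntegral.integral_const_mul]
  congr 1
  have I1 := (intervalIntegrable_exp_polyC nn L W 0 W
    (-(2 * π * (cR nn j n + cR nn k m) / L)))
  have I2 := (intervalIntegrable_exp_polyC nn L W 0 W
    (2 * π * (cR nn k m - cR nn j n) / L))
  have I3 := (intervalIntegrable_exp_polyC nn L W 0 W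
    (-(2 * π * (cR nn k m - cR nn j n) / L)))
  have I4 := (intervalIntegrable_exp_polyC nn L W 0 W
    (2 * π * (cR nn j n + cR nn k m) / L))
  rw [intervalIntegral.integral_add (((I1.const_mul _).sub (I2.const_mul _)).sub
      (I3.const_mul _)) (I4.const_mul _),
    intervalIntegral.integral_sub ((I1.const_mul _).sub (I2.const_mul _)) (I3.const_mul _),
    intervalIntegral.integral_sub (I1.const_mul _) (I2.const_mul _)]
  unfold YI
  rw [intervalIntegral.integral_const_mul, intervalIntegral.integral_const_mul,
    intervalIntegral.integral_const_mul, intervalIntegral.integral_const_mul,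
    intervalIntegral.integral_ofReal, intervalIntegral.integral_ofReal,
    intervalIntegral.integral_ofReal, intervalIntegral.integral_ofReal]



def dd (nn : ℕ) (j k : ℕ) (n m : ℤ) : ℤ := nn * (m - n) + k - j
def ss (nn : ℕ) (j k : ℕ) (n m : ℤ) : ℤ := nn * (n + m - 1) + j + k

lemma cast_dd (j k : ℕ) (n m : ℤ) :
    cR nn k m - cR nn j n = ((dd nn j k n m : ℤ) : ℝ) := by
  unfold dd cR; push_cast; ring

lemma cast_dd' (j k : ℕ) (n m : ℤ) :
    cR nn j n - cR nn k m = ((-dd nn j k n m : ℤ) : ℝ) := by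
  unfold dd cR; push_cast; ring

lemma cast_ss (j k : ℕ) (n m : ℤ) :
    cR nn j n + cR nn k m = ((ss nn j k n m : ℤ) : ℝ) := by
  unfold ss cR; push_cast; ring

lemma intervalIntegrable_eI_mul (a b c : ℝ) (K : ℂ) :
    IntervalIntegrable (fun x : ℝ => eI (2 * π * c * x / L) * K) volume a b := by
  apply Continuous.intervalIntegrable
  unfold eI
  fun_prop

lemma intervalIntegrable_eI_mul' (a b c : ℝ) (K : ℂ) :
    IntervalIntegrable (fun x : ℝ => eI (-(2 * π * c * x / L)) * K) volume a b := by
  apply Continuous.intervalIntegrable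
  unfold eI
  fun_prop

/-- the full double integral of a single pair -/
lemma integral_F (hL : 0 < L) (j k : ℕ) (n m : ℤ) :
    (∫ x in (0:ℝ)..L, ∫ y in (0:ℝ)..W, F nn L W j k (n, m) x y) =
      (-1) ^ (n + m) * ((ga nn L W j n : ℝ) * (ga nn L W k m : ℝ)) *
        ((if dd nn j k n m = 0 then (L : ℂ) else 0) *
            ((YI nn L W (-(2 * π * (cR nn j n + cR nn k m) / L)) : ℝ) +
             (YI nn L W (2 * π * (cR nn j n + cR nn k m) / L) : ℝ))
         - (if ss nn j k n m = 0 then (L : ℂ) else 0) *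
            ((YI nn L W (2 * π * (cR nn k m - cR nn j n) / L) : ℝ) +
             (YI nn L W (-(2 * π * (cR nn k m - cR nn j n) / L)) : ℝ))) := by
  simp only [integral_y nn L W j k n m]
  rw [intervalIntegral.integral_const_mul]
  have J1 := intervalIntegrable_eI_mul L 0 L (cR nn k m - cR nn j n)
    ((YI nn L W (-(2 * π * (cR nn j n + cR nn k m) / L)) : ℝ) : ℂ)
  have J2 := intervalIntegrable_eI_mul' L 0 L (cR nn j n + cR nn k m)
    ((YI nn L W (2 * π * (cR nn k m - cR nn j n) / L) : ℝ) : ℂ)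
  have J3 := intervalIntegrable_eI_mul L 0 L (cR nn j n + cR nn k m)
    ((YI nn L W (-(2 * π * (cR nn k m - cR nn j n) / L)) : ℝ) : ℂ)
  have J4 := intervalIntegrable_eI_mul L 0 L (cR nn j n - cR nn k m)
    ((YI nn L W (2 * π * (cR nn j n + cR nn k m) / L) : ℝ) : ℂ)
  rw [intervalIntegral.integral_add ((J1.sub J2).sub J3) J4,
    intervalIntegral.integral_sub (J1.sub J2) J3,
    intervalIntegral.integral_sub J1 J2,
    intervalIntegral.integral_mul_const, intervalIntegral.integral_mul_const,
    intervalIntegral.integral_mul_const, intervalIntegral.integral_mul_const]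
  have h1 : (∫ x in (0:ℝ)..L, eI (2 * π * (cR nn k m - cR nn j n) * x / L)) =
      if dd nn j k n m = 0 then (L : ℂ) else 0 := by
    rw [show (fun x : ℝ => eI (2 * π * (cR nn k m - cR nn j n) * x / L)) =
        fun x : ℝ => eI (2 * π * ((dd nn j k n m : ℤ) : ℝ) * x / L) from
      funext fun x => by rw [cast_dd]]
    exact integral_eI L hL (dd nn j k n m)
  have h4 : (∫ x in (0:ℝ)..L, eI (2 * π * (cR nn j n - cR nn k m) * x / L)) =
      if dd nn j k n m = 0 then (L : ℂ) else 0 := by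
    rw [show (fun x : ℝ => eI (2 * π * (cR nn j n - cR nn k m) * x / L)) =
        fun x : ℝ => eI (2 * π * ((-dd nn j k n m : ℤ) : ℝ) * x / L) from
      funext fun x => by rw [cast_dd']]
    rw [integral_eI L hL (-dd nn j k n m)]; simp only [neg_eq_zero]
  have h3 : (∫ x in (0:ℝ)..L, eI (2 * π * (cR nn j n + cR nn k m) * x / L)) =
      if ss nn j k n m = 0 then (L : ℂ) else 0 := by
    rw [show (fun x : ℝ => eI (2 * π * (cR nn j n + cR nn k m) * x / L)) =
        fun x : ℝ => eI (2 * π * ((ss nn j k n m : ℤ) : ℝ) * x / L) from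
      funext fun x => by rw [cast_ss]]
    exact integral_eI L hL (ss nn j k n m)
  have h2 : (∫ x in (0:ℝ)..L, eI (-(2 * π * (cR nn j n + cR nn k m) * x / L))) =
      if ss nn j k n m = 0 then (L : ℂ) else 0 := by
    rw [show (fun x : ℝ => eI (-(2 * π * (cR nn j n + cR nn k m) * x / L))) =
        fun x : ℝ => eI (2 * π * ((-ss nn j k n m : ℤ) : ℝ) * x / L) from
      funext fun x => by rw [show (((-ss nn j k n m : ℤ)):ℝ) = -((ss nn j k n m : ℤ):ℝ) by
        push_cast; ring, ← cast_ss]; congr 1; ring]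
    rw [integral_eI L hL (-ss nn j k n m)]; simp only [neg_eq_zero]
  rw [h1, h2, h3, h4]
  ring

/-- if `nn·a + r = 0` and `|r| < nn` then both vanish -/
lemma delta_zero {nnz a r : ℤ} (hnn : 1 ≤ nnz) (hr : |r| < nnz) (h : nnz * a + r = 0) :
    a = 0 ∧ r = 0 := by
  have h1 : |nnz * a| < nnz := by
    rw [show nnz * a = -r by linarith]; rwa [abs_neg]
  rw [abs_mul, abs_of_pos (by linarith : (0:ℤ) < nnz)] at h1
  have h2 : |a| < 1 := by nlinarith [abs_nonneg a]
  have ha : a = 0 := by rw [abs_lt] at h2; omega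
  refine ⟨ha, ?_⟩
  rw [ha, mul_zero, zero_add] at h
  exact h



lemma continuous_F (j k : ℕ) (p : ℤ × ℤ) (x : ℝ) :
    Continuous fun y : ℝ => F nn L W j k p x y := by
  unfold F
  apply Continuous.mul (by fun_prop)
  apply Continuous.mul
  · exact continuous_star.comp (by unfold term; fun_prop)
  · unfold term; fun_prop

lemma norm_F_le (j k : ℕ) (p : ℤ × ℤ) (x y : ℝ) (hy0 : 0 ≤ y) (hyW : y ≤ W)
    (hL : 0 < L) (hW : 0 < W) :
    ‖F nn L W j k p x y‖ ≤ 4 * (u nn L W j p.1 * u nn L W k p.2) := by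
  rw [F, norm_mul, norm_mul, Complex.norm_real,
    Real.norm_of_nonneg (Real.exp_pos _).le, RCLike.norm_conj]
  have hw : Real.exp (-(2 * π * nn * y ^ 2 / (L * W))) ≤ 1 := by
    rw [Real.exp_le_one_iff]
    have : (0:ℝ) ≤ 2 * π * nn * y ^ 2 / (L * W) := by positivity
    linarith
  calc Real.exp (-(2 * π * nn * y ^ 2 / (L * W))) *
        (‖term nn L W j p.1 ((x:ℂ) + I * y)‖ * ‖term nn L W k p.2 ((x:ℂ) + I * y)‖)
      ≤ 1 * ((2 * u nn L W j p.1) * (2 * u nn L W k p.2)) := by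
        apply mul_le_mul hw _ (mul_nonneg (norm_nonneg _) (norm_nonneg _)) zero_le_one
        exact mul_le_mul (norm_term_le nn L W j p.1 x y hy0 hyW hL)
          (norm_term_le nn L W k p.2 x y hy0 hyW hL) (norm_nonneg _)
          (mul_nonneg (by norm_num) (u_pos nn L W j p.1).le)
    _ = 4 * (u nn L W j p.1 * u nn L W k p.2) := by ring

lemma summable_uu (hL : 0 < L) (hW : 0 < W) (hnn : 0 < nn) (j k : ℕ) :
    Summable fun p : ℤ × ℤ => u nn L W j p.1 * u nn L W k p.2 :=
  (summable_u nn L W hL hW hnn j).mul_of_nonneg (summable_u nn L W hL hW hnn k)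
    (fun n => (u_pos nn L W j n).le) (fun n => (u_pos nn L W k n).le)

lemma setint_norm_le (f : ℝ → ℂ) (b C : ℝ) (hb : 0 ≤ b)
    (hf : IntegrableOn f (Set.Ioc 0 b) volume)
    (h : ∀ y ∈ Set.Ioc (0:ℝ) b, ‖f y‖ ≤ C) :
    (∫ y in Set.Ioc (0:ℝ) b, ‖f y‖) ≤ b * C := by
  rcases eq_or_lt_of_le hb with hb' | hb'
  · rw [← hb']
    simp
  · have hC : 0 ≤ C := le_trans (norm_nonneg _) (h b ⟨hb', le_refl b⟩)
    calc (∫ y in Set.Ioc (0:ℝ) b, ‖f y‖)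
        ≤ ∫ _ in Set.Ioc (0:ℝ) b, C := by
          apply setIntegral_mono_on hf.norm
            (integrableOn_const measure_Ioc_lt_top.ne) measurableSet_Ioc h
      _ = (volume (Set.Ioc (0:ℝ) b)).toReal * C := by rw [setIntegral_const, smul_eq_mul, measureReal_def]
      _ = b * C := by
          rw [Real.volume_Ioc, ENNReal.toReal_ofReal (by linarith)]
          ring_nf


lemma integrand_eq (hL : 0 < L) (hW : 0 < W) (hnn : 0 < nn) (j k : ℕ) (x y : ℝ)
    (hy0 : 0 ≤ y) (hyW : y ≤ W) :
    ((Real.exp (-(2 * π * nn * y ^ 2 / (L * W))) : ℝ) : ℂ) *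
      (conj (MB nn L W (j : ℝ) ((x:ℂ) + I * y)) * MB nn L W (k : ℝ) ((x:ℂ) + I * y)) =
    ∑' p : ℤ × ℤ, F nn L W j k p x y := by
  rw [MB_eq nn L W hL hW hnn j x y hy0 hyW, MB_eq nn L W hL hW hnn k x y hy0 hyW]
  rw [map_mul, Complex.conj_I]
  have hstar : conj (∑' n : ℤ, term nn L W j n ((x:ℂ) + I * y)) =
      ∑' n : ℤ, conj (term nn L W j n ((x:ℂ) + I * y)) := tsum_star
  rw [hstar]
  have hf : Summable fun n : ℤ => ‖conj (term nn L W j n ((x:ℂ) + I * y))‖ :=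
    (summable_norm_term nn L W hL hW hnn j x y hy0 hyW).congr
      fun n => (RCLike.norm_conj _).symm
  have hg := summable_norm_term nn L W hL hW hnn k x y hy0 hyW
  rw [show ∀ S T : ℂ, -I * S * (I * T) = S * T from fun S T => by
    rw [show -I * S * (I * T) = -(I * I) * (S * T) from by ring, Complex.I_mul_I]; ring]
  rw [tsum_mul_tsum_of_summable_norm hf hg, ← tsum_mul_left]
  rfl

/-- the main analytic reduction : the double integral equals the sum of
the double integrals of the pairs -/
lemma lhs_eq (hL : 0 < L) (hW : 0 < W) (hnn : 0 < nn) (j k : ℕ) :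
    ((∫ x in (0:ℝ)..L, ∫ y in (0:ℝ)..W,
      ((Real.exp (-(2 * π * nn * y ^ 2 / (L * W))) : ℝ) : ℂ) *
        (conj (MB nn L W (j : ℝ) ((x:ℂ) + I * y)) * MB nn L W (k : ℝ) ((x:ℂ) + I * y))) =
      ∑' p : ℤ × ℤ, ∫ x in (0:ℝ)..L, ∫ y in (0:ℝ)..W, F nn L W j k p x y) ∧
    Summable fun p : ℤ × ℤ => ∫ x in (0:ℝ)..L, ∫ y in (0:ℝ)..W, F nn L W j k p x y := by
  have huu := summable_uu nn L W hL hW hnn j k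
  have hFint : ∀ (p : ℤ × ℤ) (x : ℝ),
      IntegrableOn (fun y => F nn L W j k p x y) (Set.Ioc 0 W) volume :=
    fun p x => (continuous_F nn L W j k p x).integrableOn_Ioc
  have hYnorm : ∀ (p : ℤ × ℤ) (x : ℝ),
      (∫ y in Set.Ioc (0:ℝ) W, ‖F nn L W j k p x y‖) ≤
        W * (4 * (u nn L W j p.1 * u nn L W k p.2)) := by
    intro p x
    apply setint_norm_le _ _ _ hW.le (hFint p x)
    intro y hy
    exact norm_F_le nn L W j k p x y hy.1.le hy.2 hL hW
  have hswapy : ∀ x : ℝ, (∫ y in (0:ℝ)..W, ∑' p : ℤ × ℤ, F nn L W j k p x y) =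
      ∑' p : ℤ × ℤ, ∫ y in (0:ℝ)..W, F nn L W j k p x y := by
    intro x
    simp_rw [intervalIntegral.integral_of_le hW.le]
    exact (integral_tsum_of_summable_integral_norm (fun p => hFint p x)
      (((huu.mul_left 4).mul_left W).of_nonneg_of_le
        (fun p => integral_nonneg fun y => norm_nonneg _)
        (fun p => hYnorm p x))).symm
  have hGint : ∀ p : ℤ × ℤ,
      IntegrableOn (fun x => ∫ y in (0:ℝ)..W, F nn L W j k p x y) (Set.Ioc 0 L) volume := by
    intro p
    rw [show (fun x => ∫ y in (0:ℝ)..W, F nn L W j k p x y) = fun x =>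
        (-1) ^ (p.1 + p.2) * ((ga nn L W j p.1 : ℝ) * (ga nn L W k p.2 : ℝ)) *
        (eI (2 * π * (cR nn k p.2 - cR nn j p.1) * x / L) *
            (YI nn L W (-(2 * π * (cR nn j p.1 + cR nn k p.2) / L)) : ℝ)
         - eI (-(2 * π * (cR nn j p.1 + cR nn k p.2) * x / L)) *
            (YI nn L W (2 * π * (cR nn k p.2 - cR nn j p.1) / L) : ℝ)
         - eI (2 * π * (cR nn j p.1 + cR nn k p.2) * x / L) *
            (YI nn L W (-(2 * π * (cR nn k p.2 - cR nn j p.1) / L)) : ℝ)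
         + eI (2 * π * (cR nn j p.1 - cR nn k p.2) * x / L) *
            (YI nn L W (2 * π * (cR nn j p.1 + cR nn k p.2) / L) : ℝ)) from
      funext fun x => integral_y nn L W j k p.1 p.2 x]
    apply Continuous.integrableOn_Ioc
    unfold eI
    fun_prop
  have hGnorm : ∀ p : ℤ × ℤ,
      (∫ x in Set.Ioc (0:ℝ) L, ‖∫ y in (0:ℝ)..W, F nn L W j k p x y‖) ≤
        L * (W * (4 * (u nn L W j p.1 * u nn L W k p.2))) := by
    intro p
    apply setint_norm_le _ _ _ hL.le (hGint p)
    intro x _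
    calc ‖∫ y in (0:ℝ)..W, F nn L W j k p x y‖
        ≤ ∫ y in Set.Ioc (0:ℝ) W, ‖F nn L W j k p x y‖ := by
          rw [intervalIntegral.integral_of_le hW.le]
          exact norm_integral_le_integral_norm _
      _ ≤ W * (4 * (u nn L W j p.1 * u nn L W k p.2)) := hYnorm p x
  have hGsum : Summable fun p : ℤ × ℤ =>
      ∫ x in Set.Ioc (0:ℝ) L, ‖∫ y in (0:ℝ)..W, F nn L W j k p x y‖ :=
    (((huu.mul_left 4).mul_left W).mul_left L).of_nonneg_of_le
      (fun p => integral_nonneg fun x => norm_nonneg _) hGnorm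
  have hkey := hasSum_integral_of_summable_integral_norm
    (μ := volume.restrict (Set.Ioc (0:ℝ) L)) hGint hGsum
  constructor
  · calc (∫ x in (0:ℝ)..L, ∫ y in (0:ℝ)..W,
        ((Real.exp (-(2 * π * nn * y ^ 2 / (L * W))) : ℝ) : ℂ) *
          (conj (MB nn L W (j : ℝ) ((x:ℂ) + I * y)) * MB nn L W (k : ℝ) ((x:ℂ) + I * y)))
        = ∫ x in (0:ℝ)..L, ∫ y in (0:ℝ)..W, ∑' p : ℤ × ℤ, F nn L W j k p x y := by
          apply intervalIntegral.integral_congr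
          intro x _
          apply intervalIntegral.integral_congr
          intro y hy
          rw [Set.uIcc_of_le hW.le] at hy
          exact integrand_eq nn L W hL hW hnn j k x y hy.1 hy.2
      _ = ∫ x in (0:ℝ)..L, ∑' p : ℤ × ℤ, ∫ y in (0:ℝ)..W, F nn L W j k p x y :=
          intervalIntegral.integral_congr fun x _ => hswapy x
      _ = ∫ x in Set.Ioc (0:ℝ) L, ∑' p : ℤ × ℤ, ∫ y in (0:ℝ)..W, F nn L W j k p x y :=
          intervalIntegral.integral_of_le hL.le
      _ = ∑' p : ℤ × ℤ, ∫ x in Set.Ioc (0:ℝ) L, ∫ y in (0:ℝ)..W, F nn L W j k p x y :=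
          hkey.tsum_eq.symm
      _ = ∑' p : ℤ × ℤ, ∫ x in (0:ℝ)..L, ∫ y in (0:ℝ)..W, F nn L W j k p x y :=
          tsum_congr fun p => (intervalIntegral.integral_of_le hL.le).symm
  · exact hkey.summable.congr fun p => (intervalIntegral.integral_of_le hL.le).symm



lemma ga_zero_symm (n : ℤ) : ga nn L W 0 (1 - n) = ga nn L W 0 n := by
  unfold ga
  congr 1
  push_cast
  ring

lemma sqrtid (hL : 0 < L) (hW : 0 < W) (hnn : 0 < nn) :
    L * Real.sqrt (L * W / (2 * nn)) = L * W / Real.sqrt (2 * nn * W / L) := by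
  have hnn' : (0:ℝ) < (nn:ℝ) := by exact_mod_cast hnn
  rw [eq_div_iff (by positivity : Real.sqrt (2 * nn * W / L) ≠ 0)]
  rw [mul_assoc, ← Real.sqrt_mul (by positivity : (0:ℝ) ≤ L * W / (2 * nn))]
  rw [show L * W / (2 * (nn:ℝ)) * (2 * nn * W / L) = W ^ 2 by field_simp]
  rw [Real.sqrt_sq hW.le]

/-- the real value of a diagonal pair -/
lemma Dval (hL : 0 < L) (hW : 0 < W) (hnn : 0 < nn) (j : ℕ) (n : ℤ) :
    ga nn L W j n ^ 2 * YI nn L W (-(2 * π * (cR nn j n + cR nn j n) / L)) +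
      ga nn L W j n ^ 2 * YI nn L W (2 * π * (cR nn j n + cR nn j n) / L) =
    Real.exp (2 * π * W * (j : ℝ) ^ 2 / (L * nn)) *
      (P nn L W (W * ((j : ℝ) / nn - 1 / 2 + n)) +
       P nn L W (-(W * ((j : ℝ) / nn - 1 / 2 + n)))) := by
  have hnn' : (0:ℝ) < (nn:ℝ) := by exact_mod_cast hnn
  have harg1 : -(2 * π * (cR nn j n + cR nn j n) / L) = 1 * (-(4 * π * cR nn j n / L)) := by
    ring
  have harg2 : 2 * π * (cR nn j n + cR nn j n) / L = (-1) * (-(4 * π * cR nn j n / L)) := by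
    ring
  have hc : W / nn * cR nn j n = W * ((j : ℝ) / nn - 1 / 2 + n) := by
    unfold cR; field_simp
    try ring
    try exact Or.inl trivial
  rw [harg1, harg2, gauss_complete nn L W hL hW hnn j n 1 (Or.inl rfl),
    gauss_complete nn L W hL hW hnn j n (-1) (Or.inr rfl), hc]
  rw [show (-1 : ℝ) * (W * ((j : ℝ) / nn - 1 / 2 + n)) = -(W * ((j : ℝ) / nn - 1 / 2 + n)) by
    ring, one_mul]
  ring



lemma T_offdiag (hL : 0 < L) (hnn0 : 0 < nn) (j k : ℕ) (hjk : j ≠ k)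
    (hbound : (j : ℤ) + k < nn) (n m : ℤ) :
    (∫ x in (0:ℝ)..L, ∫ y in (0:ℝ)..W, F nn L W j k (n, m) x y) = 0 := by
  rw [integral_F nn L W hL j k n m]
  have hdd : dd nn j k n m ≠ 0 := by
    intro h
    have h' : (nn:ℤ) * (m - n) + ((k:ℤ) - j) = 0 := by unfold dd at h; linarith
    obtain ⟨h1, h2⟩ := delta_zero (by omega) (by rw [abs_lt]; omega) h'
    exact hjk (by omega)
  have hss : ss nn j k n m ≠ 0 := by
    intro h
    have h' : (nn:ℤ) * (n + m - 1) + ((j:ℤ) + k) = 0 := by unfold ss at h; linarith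
    obtain ⟨h1, h2⟩ := delta_zero (by omega) (by rw [abs_lt]; omega) h'
    exact hjk (by omega)
  rw [if_neg hdd, if_neg hss]
  simp

lemma T_diag (hL : 0 < L) (hW : 0 < W) (hnn0 : 0 < nn) (j : ℕ) (hj2 : 2 * (j : ℤ) < nn)
    (n : ℤ) :
    (∫ x in (0:ℝ)..L, ∫ y in (0:ℝ)..W, F nn L W j j (n, n) x y) =
      (((L * Real.exp (2 * π * W * (j : ℝ) ^ 2 / (L * nn))) *
        (P nn L W (W * ((j : ℝ) / nn - 1 / 2 + n)) +
         P nn L W (-(W * ((j : ℝ) / nn - 1 / 2 + n)))) : ℝ) : ℂ) := by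
  rw [integral_F nn L W hL j j n n]
  have hdd0 : dd nn j j n n = 0 := by unfold dd; ring
  have hss : ss nn j j n n ≠ 0 := by
    intro h
    have h' : (nn:ℤ) * (n + n - 1) + ((j:ℤ) + j) = 0 := by unfold ss at h; linarith
    obtain ⟨h1, h2⟩ := delta_zero (by omega) (by rw [abs_lt]; omega) h'
    omega
  rw [if_pos hdd0, if_neg hss]
  rw [show ((-1:ℂ)) ^ (n + n) = 1 by
    rw [show n + n = 2 * n by ring, zpow_mul]; norm_num]
  have hD := Dval nn L W hL hW hnn0 j n
  rw [show (L * Real.exp (2 * π * W * (j : ℝ) ^ 2 / (L * nn))) *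
      (P nn L W (W * ((j : ℝ) / nn - 1 / 2 + n)) +
       P nn L W (-(W * ((j : ℝ) / nn - 1 / 2 + n)))) =
      L * (ga nn L W j n ^ 2 * YI nn L W (-(2 * π * (cR nn j n + cR nn j n) / L)) +
        ga nn L W j n ^ 2 * YI nn L W (2 * π * (cR nn j n + cR nn j n) / L)) by
    rw [hD]; ring]
  push_cast
  ring

lemma T_cross_ne (hL : 0 < L) (hnn0 : 0 < nn) (j : ℕ) (hj0 : j ≠ 0)
    (hj2 : 2 * (j : ℤ) < nn) (n : ℤ) :
    (∫ x in (0:ℝ)..L, ∫ y in (0:ℝ)..W, F nn L W j j (n, 1 - n) x y) = 0 := by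
  rw [integral_F nn L W hL j j n (1 - n)]
  have hdd : dd nn j j n (1 - n) ≠ 0 := by
    intro h
    have h' : (nn:ℤ) * ((1 - n) - n) + ((j:ℤ) - j) = 0 := by unfold dd at h; linarith
    obtain ⟨h1, h2⟩ := delta_zero (by omega) (by rw [abs_lt]; omega) h'
    omega
  have hss : ss nn j j n (1 - n) ≠ 0 := by
    intro h
    have h' : (nn:ℤ) * (n + (1 - n) - 1) + ((j:ℤ) + j) = 0 := by unfold ss at h; linarith
    obtain ⟨h1, h2⟩ := delta_zero (by omega) (by rw [abs_lt]; omega) h'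
    omega
  rw [if_neg hdd, if_neg hss]
  simp

lemma T_cross0 (hL : 0 < L) (hW : 0 < W) (hnn0 : 0 < nn) (n : ℤ) :
    (∫ x in (0:ℝ)..L, ∫ y in (0:ℝ)..W, F nn L W 0 0 (n, 1 - n) x y) =
      (((L * Real.exp (2 * π * W * ((0:ℕ) : ℝ) ^ 2 / (L * nn))) *
        (P nn L W (W * (((0:ℕ) : ℝ) / nn - 1 / 2 + n)) +
         P nn L W (-(W * (((0:ℕ) : ℝ) / nn - 1 / 2 + n)))) : ℝ) : ℂ) := by
  rw [integral_F nn L W hL 0 0 n (1 - n)]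
  have hdd : dd nn 0 0 n (1 - n) ≠ 0 := by
    intro h
    have h' : (nn:ℤ) * ((1 - n) - n) + ((0:ℤ) - 0) = 0 := by unfold dd at h; push_cast at h ⊢; linarith
    obtain ⟨h1, h2⟩ := delta_zero (by omega) (by rw [abs_lt]; omega) h'
    omega
  have hss0 : ss nn 0 0 n (1 - n) = 0 := by unfold ss; push_cast; ring
  rw [if_neg hdd, if_pos hss0]
  rw [show n + (1 - n) = 1 by ring, zpow_one]
  have hcc : cR nn 0 (1 - n) = -cR nn 0 n := by unfold cR; push_cast; ring
  rw [ga_zero_symm, hcc]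
  rw [show 2 * π * (-cR nn 0 n - cR nn 0 n) / L = -(2 * π * (cR nn 0 n + cR nn 0 n) / L) by ring]
  rw [show -(-(2 * π * (cR nn 0 n + cR nn 0 n) / L)) = 2 * π * (cR nn 0 n + cR nn 0 n) / L by ring]
  have hD := Dval nn L W hL hW hnn0 0 n
  rw [show (L * Real.exp (2 * π * W * ((0:ℕ) : ℝ) ^ 2 / (L * nn))) *
      (P nn L W (W * (((0:ℕ) : ℝ) / nn - 1 / 2 + n)) +
       P nn L W (-(W * (((0:ℕ) : ℝ) / nn - 1 / 2 + n)))) =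
      L * (ga nn L W 0 n ^ 2 * YI nn L W (-(2 * π * (cR nn 0 n + cR nn 0 n) / L)) +
        ga nn L W 0 n ^ 2 * YI nn L W (2 * π * (cR nn 0 n + cR nn 0 n) / L)) by
    rw [hD]; ring]
  push_cast
  ring



lemma tiling_neg (hL : 0 < L) (hW : 0 < W) (hnn : 0 < nn) (γ : ℝ) :
    HasSum (fun n : ℤ => P nn L W (-(W * (γ + n)))) (Real.sqrt (L * W / (2 * nn))) := by
  have h := tiling nn L W hL hW hnn (-γ)
  have h2 := (Equiv.neg ℤ).hasSum_iff.mpr h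
  have heq : ((fun n : ℤ => P nn L W (W * (-γ + n))) ∘ (Equiv.neg ℤ)) =
      fun n : ℤ => P nn L W (-(W * (γ + n))) := by
    funext n
    simp only [Function.comp_apply, Equiv.neg_apply]
    congr 1
    push_cast
    ring
  rwa [heq] at h2

/-- The main orthogonality result. -/
lemma main (hL : 0 < L) (hW : 0 < W) {N : ℕ} (hN : 1 ≤ N) (hnn : 2 * N - 1 ≤ nn)
    (j k : Fin N) :
    lhsInt N nn L W j k = if j = k then ((hB N nn L W j : ℝ) : ℂ) else 0 := by
  have hnn0 : 0 < nn := by omega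
  have hnn' : (0:ℝ) < (nn:ℝ) := by exact_mod_cast hnn0
  obtain ⟨hEq, hSum⟩ := lhs_eq nn L W hL hW hnn0 (j : ℕ) (k : ℕ)
  have hjN : (j : ℕ) < N := j.isLt
  have hkN : (k : ℕ) < N := k.isLt
  by_cases hjk : j = k
  · subst hjk
    rw [if_pos rfl]
    have hj2 : 2 * ((j : ℕ) : ℤ) < nn := by omega
    have hrow0 : ∀ n : ℤ, ∀ m ∉ ({n, 1 - n} : Finset ℤ),
        (∫ x in (0:ℝ)..L, ∫ y in (0:ℝ)..W, F nn L W (j:ℕ) (j:ℕ) (n, m) x y) = 0 := by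
      intro n m hm
      simp only [Finset.mem_insert, Finset.mem_singleton] at hm
      push_neg at hm
      rw [integral_F nn L W hL (j:ℕ) (j:ℕ) n m]
      have hdd : dd nn (j:ℕ) (j:ℕ) n m ≠ 0 := by
        intro h
        have h' : (nn:ℤ) * (m - n) + (((j:ℕ):ℤ) - (j:ℕ)) = 0 := by unfold dd at h; linarith
        obtain ⟨h1, h2⟩ := delta_zero (by omega) (by rw [abs_lt]; omega) h'
        exact hm.1 (by omega)
      have hss : ss nn (j:ℕ) (j:ℕ) n m ≠ 0 := by
        intro h
        have h' : (nn:ℤ) * (n + m - 1) + (((j:ℕ):ℤ) + (j:ℕ)) = 0 := by unfold ss at h; linarith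
        obtain ⟨h1, h2⟩ := delta_zero (by omega) (by rw [abs_lt]; omega) h'
        exact hm.2 (by omega)
      rw [if_neg hdd, if_neg hss]
      simp
    have hrowsum : ∀ n : ℤ, Summable fun m : ℤ =>
        ∫ x in (0:ℝ)..L, ∫ y in (0:ℝ)..W, F nn L W (j:ℕ) (j:ℕ) (n, m) x y := fun n =>
      summable_of_ne_finset_zero (s := {n, 1 - n}) (hrow0 n)
    have hprod : (∑' p : ℤ × ℤ, ∫ x in (0:ℝ)..L, ∫ y in (0:ℝ)..W,
          F nn L W (j:ℕ) (j:ℕ) p x y) =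
        ∑' n : ℤ, ∑' m : ℤ, ∫ x in (0:ℝ)..L, ∫ y in (0:ℝ)..W,
          F nn L W (j:ℕ) (j:ℕ) (n, m) x y := Summable.tsum_prod' hSum hrowsum
    have hinner : ∀ n : ℤ, (∑' m : ℤ, ∫ x in (0:ℝ)..L, ∫ y in (0:ℝ)..W,
          F nn L W (j:ℕ) (j:ℕ) (n, m) x y) =
        (∫ x in (0:ℝ)..L, ∫ y in (0:ℝ)..W, F nn L W (j:ℕ) (j:ℕ) (n, n) x y) +
        (∫ x in (0:ℝ)..L, ∫ y in (0:ℝ)..W, F nn L W (j:ℕ) (j:ℕ) (n, 1 - n) x y) := by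
      intro n
      rw [tsum_eq_sum (hrow0 n), Finset.sum_pair (by omega : n ≠ 1 - n)]
    have hP1 := tiling nn L W hL hW hnn0 ((j:ℝ) / nn - 1 / 2)
    have hP2 := tiling_neg nn L W hL hW hnn0 ((j:ℝ) / nn - 1 / 2)
    have hRsum := (hP1.add hP2).mul_left (L * Real.exp (2 * π * W * ((j:ℕ) : ℝ) ^ 2 / (L * nn)))
    have hCsum := hRsum.mapL Complex.ofRealCLM
    by_cases hj0 : (j : ℕ) = 0
    · calc lhsInt N nn L W j j
          = ∑' p : ℤ × ℤ, ∫ x in (0:ℝ)..L, ∫ y in (0:ℝ)..W,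
              F nn L W (j:ℕ) (j:ℕ) p x y := by unfold lhsInt; exact hEq
        _ = ∑' n : ℤ, (((L * Real.exp (2 * π * W * ((j:ℕ) : ℝ) ^ 2 / (L * nn))) *
              (P nn L W (W * (((j:ℕ) : ℝ) / nn - 1 / 2 + n)) +
               P nn L W (-(W * (((j:ℕ) : ℝ) / nn - 1 / 2 + n)))) : ℝ) : ℂ) * 2 := by
            rw [hprod]
            apply tsum_congr
            intro n
            rw [hinner n, T_diag nn L W hL hW hnn0 (j:ℕ) hj2 n]
            rw [show ((n : ℤ), 1 - n) = ((n : ℤ), 1 - n) from rfl]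
            have := T_cross0 nn L W hL hW hnn0 n
            rw [hj0]
            rw [this]
            push_cast
            ring
        _ = (((L * Real.exp (2 * π * W * ((j:ℕ) : ℝ) ^ 2 / (L * nn))) *
              (Real.sqrt (L * W / (2 * nn)) + Real.sqrt (L * W / (2 * nn))) : ℝ) : ℂ) * 2 := by
            rw [tsum_mul_right]
            congr 1
            exact hCsum.tsum_eq
        _ = ((hB N nn L W j : ℝ) : ℂ) := by
            rw [hB, if_pos hj0]
            rw [show (2:ℂ) = ((2:ℝ):ℂ) from by norm_num, ← Complex.ofReal_mul]
            congr 1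
            rw [hj0]
            rw [show (2 * π * W * ((0:ℕ):ℝ) ^ 2 / (L * (nn:ℝ)) : ℝ) = 0 by norm_num,
              Real.exp_zero]
            rw [show (L * 1 * (Real.sqrt (L * W / (2 * nn)) + Real.sqrt (L * W / (2 * nn))) * 2 : ℝ)
                = 4 * (L * Real.sqrt (L * W / (2 * nn))) by ring, sqrtid nn L W hL hW hnn0]
    · calc lhsInt N nn L W j j
          = ∑' p : ℤ × ℤ, ∫ x in (0:ℝ)..L, ∫ y in (0:ℝ)..W,
              F nn L W (j:ℕ) (j:ℕ) p x y := by unfold lhsInt; exact hEq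
        _ = ∑' n : ℤ, (((L * Real.exp (2 * π * W * ((j:ℕ) : ℝ) ^ 2 / (L * nn))) *
              (P nn L W (W * (((j:ℕ) : ℝ) / nn - 1 / 2 + n)) +
               P nn L W (-(W * (((j:ℕ) : ℝ) / nn - 1 / 2 + n)))) : ℝ) : ℂ) := by
            rw [hprod]
            apply tsum_congr
            intro n
            rw [hinner n, T_diag nn L W hL hW hnn0 (j:ℕ) hj2 n,
              T_cross_ne nn L W hL hnn0 (j:ℕ) hj0 hj2 n, add_zero]
        _ = (((L * Real.exp (2 * π * W * ((j:ℕ) : ℝ) ^ 2 / (L * nn))) *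
              (Real.sqrt (L * W / (2 * nn)) + Real.sqrt (L * W / (2 * nn))) : ℝ) : ℂ) :=
            hCsum.tsum_eq
        _ = ((hB N nn L W j : ℝ) : ℂ) := by
            rw [hB, if_neg hj0]
            have hs := sqrtid nn L W hL hW hnn0
            rw [show (L * Real.exp (2 * π * W * ((j:ℕ) : ℝ) ^ 2 / (L * nn)) *
                (Real.sqrt (L * W / (2 * nn)) + Real.sqrt (L * W / (2 * nn))) : ℝ)
                = 2 * (L * Real.sqrt (L * W / (2 * nn))) *
                  Real.exp (2 * π * W * ((j:ℕ) : ℝ) ^ 2 / (L * nn)) by ring, hs]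
            rw [show (2 * π * W * ((j:ℕ) : ℝ) ^ 2 / (L * nn) : ℝ)
                = 2 * π * W * ((j:ℕ) : ℝ) ^ 2 / (nn * L) by ring]
  · rw [if_neg hjk]
    have hne : (j : ℕ) ≠ (k : ℕ) := fun h => hjk (Fin.ext h)
    calc lhsInt N nn L W j k
        = ∑' p : ℤ × ℤ, ∫ x in (0:ℝ)..L, ∫ y in (0:ℝ)..W,
            F nn L W (j:ℕ) (k:ℕ) p x y := by unfold lhsInt; exact hEq
      _ = 0 := by
          rw [show (0:ℂ) = ∑' _ : ℤ × ℤ, (0:ℂ) by rw [tsum_zero]]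
          apply tsum_congr
          intro p
          rw [T_offdiag nn L W hL hnn0 (j:ℕ) (k:ℕ) hne (by omega) p.1 p.2]

end St7

theorem statement7 (N : ℕ) (hN : 1 ≤ N) (L W : ℝ) (hL : 0 < L) (hW : 0 < W)
    (j k : Fin N) :
    -- type B_N : 𝒩 = 2N−1
    (lhsInt N (2 * N - 1) L W j k
      = if j = k then ((hB N (2 * N - 1) L W j : ℝ) : ℂ) else 0) ∧
    -- type B_N^∨ : 𝒩 = 2N
    (lhsInt N (2 * N) L W j k
      = if j = k then ((hB N (2 * N) L W j : ℝ) : ℂ) else 0) := by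
  constructor
  · exact St7.main (2 * N - 1) L W hL hW hN (le_refl _) j k
  · exact St7.main (2 * N) L W hL hW hN (by omega) j k
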